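/- arXiv:1109.6779 — 3 statements merged into one kernel-verified Lean document; each statement's English description precedes it below -/
import Mathlib

section
/- Equivalence (1 ⇒ 2): if sup_{n≥0} η_n(v) < ∞ where v = e^V, and (H1) drift holds (so sublevel sets C_d satisfy η_n(C_d^c) ≤ η_n(v)e^{-d}) and (H3) local minorization holds, then inf_{n≥0} λ_n > 0, where λ_n = η_n(G_n). -/
open MeasureTheory ENNReal

/-- (1 ⇒ 2).  If `sup_{n≥0} η_n(v) < ∞` with `v = e^V`, the
multiplicative drift (H1) holds, and the local minorization (H3) holds, then
`inf_{n≥0} λ_n > 0`, where `λ_n = η_n(G_n)`. -/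
theorem fk_eta_bounded_implies_lambda_bounded_below
    {X : Type*} [MeasurableSpace X]
    (μ : Measure X) [IsProbabilityMeasure μ]
    (M : ℕ → X → Measure X) (hM : ∀ n x, IsProbabilityMeasure (M n x))
    (G : ℕ → X → ℝ≥0∞) (hGmeas : ∀ n, Measurable (G n))
    (hGpos : ∀ n x, 0 < G n x) (hGbdd : ∀ n, ∃ C, C < ⊤ ∧ ∀ x, G n x ≤ C)
    (Q : ℕ → X → Measure X) (hQ : ∀ n x, Q (n + 1) x = (G n x) • M (n + 1) x)
    (Qseq : ℕ → ℕ → X → Measure X)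
    (hQseq0 : ∀ p x, Qseq p p x = Measure.dirac x)
    (hQseqS : ∀ p n x, p ≤ n → Qseq p (n + 1) x = (Qseq p n x).bind (Q (n + 1)))
    (γ : ℕ → Measure X) (hγ : ∀ n, γ n = μ.bind (Qseq 0 n))
    (hγpos : ∀ n, 0 < γ n Set.univ) (hγfin : ∀ n, γ n Set.univ < ⊤)
    (η : ℕ → Measure X) (hη : ∀ n, η n = (γ n Set.univ)⁻¹ • γ n)
    (lam : ℕ → ℝ≥0∞) (hlam : ∀ n, lam n = ∫⁻ x, G n x ∂ η n)
    (V : X → ℝ) (hV1 : ∀ x, 1 ≤ V x) (hVunbdd : ∀ r : ℝ, ∃ x, r < V x)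
    (v : X → ℝ≥0∞) (hv : ∀ x, v x = ENNReal.ofReal (Real.exp (V x)))
    (δ dlow : ℝ) (hδ : 0 < δ) (hdlow : 1 ≤ dlow)
    -- (H1) multiplicative drift
    (hdrift : ∀ d : ℝ, dlow ≤ d → ∃ bd : ℝ, ∀ n x,
      ∫⁻ y, v y ∂ (Q (n + 1) x) ≤
        ENNReal.ofReal (Real.exp (V x * (1 - δ) +
          bd * Set.indicator {z | V z ≤ d} (fun _ => (1 : ℝ)) x)))
    -- (H3) local minorization
    (hminor : ∀ d : ℝ, dlow ≤ d → ∃ (ν : Measure X) (εminus : ℝ≥0∞),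
      IsProbabilityMeasure ν ∧ 0 < εminus ∧ 0 < ν {z | V z ≤ d} ∧
      ∀ n x, V x ≤ d → ∀ A : Set X, MeasurableSet A →
        εminus * ν ({z | V z ≤ d} ∩ A) ≤ Q (n + 1) x ({z | V z ≤ d} ∩ A))
    -- (1): uniformly bounded v-moments of the prediction filters
    (hbdd : (⨆ n, ∫⁻ x, v x ∂ η n) < ⊤) :
    0 < ⨅ n, lam n := by
  classical
  -- η n is a probability measure
  have hηuniv : ∀ n, η n Set.univ = 1 := by
    intro n
    rw [hη n, Measure.smul_apply, smul_eq_mul]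
    exact ENNReal.inv_mul_cancel (hγpos n).ne' (hγfin n).ne
  set S := ⨆ n, ∫⁻ x, v x ∂ η n with hS
  have hSfin : S ≠ ⊤ := hbdd.ne
  set t := S.toReal with ht
  have htnn : 0 ≤ t := ENNReal.toReal_nonneg
  set d : ℝ := max dlow (Real.log (2 * t + 1)) with hd
  have hddlow : dlow ≤ d := le_max_left _ _
  -- the key smallness estimate
  have hexp : ENNReal.ofReal (Real.exp (-d)) * S ≤ 2⁻¹ := by
    have h1 : (2 * t + 1) ≤ Real.exp d := by
      calc 2 * t + 1 = Real.exp (Real.log (2 * t + 1)) := by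
            rw [Real.exp_log (by linarith)]
        _ ≤ Real.exp d := Real.exp_le_exp.mpr (le_max_right _ _)
    have h2 : Real.exp (-d) ≤ (2 * t + 1)⁻¹ := by
      rw [Real.exp_neg]
      exact inv_anti₀ (by linarith) h1
    have h3 : Real.exp (-d) * t ≤ 1 / 2 := by
      have h4 : Real.exp (-d) * t ≤ (2 * t + 1)⁻¹ * t :=
        mul_le_mul_of_nonneg_right h2 htnn
      have h5 : (2 * t + 1)⁻¹ * t ≤ 1 / 2 := by
        rw [inv_mul_le_iff₀ (by linarith)]
        nlinarith
      linarith
    calc ENNReal.ofReal (Real.exp (-d)) * S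
        = ENNReal.ofReal (Real.exp (-d)) * ENNReal.ofReal t := by
          rw [ht, ENNReal.ofReal_toReal hSfin]
      _ = ENNReal.ofReal (Real.exp (-d) * t) := by
          rw [ENNReal.ofReal_mul (Real.exp_nonneg _)]
      _ ≤ ENNReal.ofReal (1 / 2) := ENNReal.ofReal_le_ofReal h3
      _ = 2⁻¹ := by
          rw [one_div, ENNReal.ofReal_inv_of_pos (by norm_num)]
          norm_num
  obtain ⟨ν, ε, hνprob, hεpos, hνd, hmin⟩ := hminor d hddlow
  set ε' := min ε 1 with hε'
  set c := ε' * ν {z | V z ≤ d} with hc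
  have hcpos : 0 < c :=
    ENNReal.mul_pos (lt_min hεpos zero_lt_one).ne' hνd.ne'
  have hctop : c ≠ ⊤ := by
    have : c ≤ 1 * 1 := by
      refine mul_le_mul' (min_le_right _ _) ?_
      exact prob_le_one
    exact (lt_of_le_of_lt (this.trans_eq (one_mul 1)) ENNReal.one_lt_top).ne
  -- lower bound for G on the sublevel set
  have hGlb : ∀ n x, V x ≤ d → c ≤ G n x := by
    intro n x hx
    have h1 := hmin n x hx Set.univ MeasurableSet.univ
    rw [Set.inter_univ] at h1
    have h2 : Q (n + 1) x {z | V z ≤ d} ≤ Q (n + 1) x Set.univ :=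
      measure_mono (Set.subset_univ _)
    have h3 : Q (n + 1) x Set.univ = G n x := by
      rw [hQ n x, Measure.smul_apply, smul_eq_mul, (hM (n + 1) x).measure_univ, mul_one]
    calc c ≤ ε * ν {z | V z ≤ d} :=
          mul_le_mul_left (min_le_left _ _) _
      _ ≤ Q (n + 1) x {z | V z ≤ d} := h1
      _ ≤ G n x := h3 ▸ h2
  set r := c * ENNReal.ofReal (Real.exp (-d)) with hr
  have hrtop : r ≠ ⊤ := ENNReal.mul_ne_top hctop ENNReal.ofReal_ne_top
  -- pointwise bound
  have hpoint : ∀ n x, c ≤ G n x + r * v x := by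
    intro n x
    by_cases hx : V x ≤ d
    · exact le_add_right (hGlb n x hx)
    · push_neg at hx
      have h1 : ENNReal.ofReal (Real.exp d) ≤ v x := by
        rw [hv x]
        exact ENNReal.ofReal_le_ofReal (Real.exp_le_exp.mpr hx.le)
      have h2 : c ≤ r * v x := by
        have hone : ENNReal.ofReal (Real.exp (-d)) * ENNReal.ofReal (Real.exp d) = 1 := by
          rw [← ENNReal.ofReal_mul (Real.exp_nonneg _), ← Real.exp_add]
          simp
        calc c = r * ENNReal.ofReal (Real.exp d) := by
              rw [hr, mul_assoc, hone, mul_one]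
          _ ≤ r * v x := mul_le_mul_right h1 _
      exact le_add_left h2
  -- main estimate: c ≤ lam n + c/2
  have hmain : ∀ n, c ≤ lam n + c * 2⁻¹ := by
    intro n
    have h0 : c = ∫⁻ _, c ∂ η n := by
      rw [lintegral_const, hηuniv n, mul_one]
    have h1 : (∫⁻ _, c ∂ η n) ≤ ∫⁻ x, G n x + r * v x ∂ η n :=
      lintegral_mono fun x => hpoint n x
    have h2 : (∫⁻ x, G n x + r * v x ∂ η n)
        = lam n + r * ∫⁻ x, v x ∂ η n := by
      rw [lintegral_add_left (hGmeas n), lintegral_const_mul' r _ hrtop, hlam n]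
    have h3 : r * (∫⁻ x, v x ∂ η n) ≤ c * 2⁻¹ := by
      calc r * (∫⁻ x, v x ∂ η n) ≤ r * S :=
            mul_le_mul_right (le_iSup (fun n => ∫⁻ x, v x ∂ η n) n) _
        _ = c * (ENNReal.ofReal (Real.exp (-d)) * S) := by rw [hr, mul_assoc]
        _ ≤ c * 2⁻¹ := mul_le_mul_right hexp _
    calc c = ∫⁻ _, c ∂ η n := h0
      _ ≤ ∫⁻ x, G n x + r * v x ∂ η n := h1
      _ = lam n + r * ∫⁻ x, v x ∂ η n := h2
      _ ≤ lam n + c * 2⁻¹ := add_le_add_right h3 _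
  have hhalf : ∀ n, c * 2⁻¹ ≤ lam n := by
    intro n
    have h1 : c - c * 2⁻¹ ≤ lam n := tsub_le_iff_right.mpr (hmain n)
    have h2 : c - c * 2⁻¹ = c * 2⁻¹ := by
      simpa [div_eq_mul_inv] using ENNReal.sub_half hctop
    rwa [h2] at h1
  have hpos2 : 0 < c * 2⁻¹ :=
    ENNReal.mul_pos hcpos.ne' (by norm_num)
  exact lt_of_lt_of_le hpos2 (le_iInf hhalf)
end

section
/- Filter stability from multiplicative stability: suppose for all φ ∈ L_v, n ≥ 1 and x ∈ X, |Q_{0,n}(φ)(x)/∏_{q=0}^{n-1}λ_q − h_{0,n}(x)η_n(φ)| ≤ ρⁿ‖φ‖_v c_μ v(x) μ(v) with ρ < 1. Then for any probability measure μ' with μ'(v) < ∞ and μ'(C_d) > 0 for some d with inf_{n≥1} inf_{x∈C_d} h_{0,n}(x) > 0, there exists c_{μ,μ'} < ∞ such that ‖η_n^{(μ)} − η_n^{(μ')}‖_v ≤ ρⁿ c_{μ,μ'} μ(v)μ'(v), where η_n^{(μ')} := μ'Q_{0,n}/μ'Q_{0,n}(1). -/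
open MeasureTheory ENNReal

section FkAux
variable {X : Type*} [MeasurableSpace X]

lemma fk_aemeasurable_of_bind {m : Measure X} {κ : X → Measure X}
    (h : m.bind κ Set.univ ≠ 0) : AEMeasurable κ m := by
  by_contra hc
  apply h
  rw [Measure.bind, Measure.map_of_not_aemeasurable hc, Measure.join_zero]
  rfl

lemma fk_bind_eq_mk {m : Measure X} {κ : X → Measure X} (h : AEMeasurable κ m) :
    m.bind κ = m.bind h.mk := by
  rw [Measure.bind, Measure.bind, Measure.map_congr h.ae_eq_mk]

lemma fk_enorm_eq (t : ℝ) :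
    (‖t‖₊ : ℝ≥0∞) = ENNReal.ofReal t + ENNReal.ofReal (-t) := by
  rcases le_total 0 t with h | h
  · rw [show (‖t‖₊ : ℝ≥0∞) = ENNReal.ofReal t from Real.enorm_eq_ofReal h,
      (show ENNReal.ofReal (-t) = 0 from ENNReal.ofReal_of_nonpos (by linarith)), add_zero]
  · have h1 : (‖t‖₊ : ℝ≥0∞) = (‖-t‖₊ : ℝ≥0∞) := by rw [nnnorm_neg]
    rw [h1, show (‖-t‖₊ : ℝ≥0∞) = ENNReal.ofReal (-t) from Real.enorm_eq_ofReal (by linarith), ENNReal.ofReal_of_nonpos h, zero_add]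

lemma fk_ofReal_abs (t : ℝ) : ENNReal.ofReal |t| = (‖t‖₊ : ℝ≥0∞) := by
  rw [← Real.nnnorm_abs t, show (‖|t|‖₊ : ℝ≥0∞) = ENNReal.ofReal |t| from Real.enorm_eq_ofReal (abs_nonneg _)]

end FkAux

/-- filter stability from multiplicative stability.  Suppose that
for every `φ ∈ L_v` (i.e. `|φ| ≤ K·v`), every `n ≥ 1` and `x`:
`|Q_{0,n}(φ)(x)/∏_{q<n}λ_q − h_{0,n}(x) η_n(φ)| ≤ ρⁿ K c_μ v(x) μ(v)` with `ρ < 1`.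
Then for any probability measure `μ'` with `μ'(v) < ∞`, `μ'(C_d) > 0` for a set
`C_d` on which the `h_{0,n}` are uniformly bounded below, there is
`c_{μ,μ'} < ∞` with `‖η_n^{(μ)} − η_n^{(μ')}‖_v ≤ ρⁿ c_{μ,μ'} μ(v) μ'(v)`. -/
theorem fk_filter_stability
    {X : Type*} [MeasurableSpace X]
    (μ μ' : Measure X) [IsProbabilityMeasure μ] [IsProbabilityMeasure μ']
    (M : ℕ → X → Measure X) (hM : ∀ n x, IsProbabilityMeasure (M n x))
    (G : ℕ → X → ℝ) (hGmeas : ∀ n, Measurable (G n))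
    (hGpos : ∀ n x, 0 < G n x) (hGbdd : ∀ n, ∃ C : ℝ, ∀ x, G n x ≤ C)
    (Q : ℕ → X → Measure X)
    (hQ : ∀ n x, Q (n + 1) x = (ENNReal.ofReal (G n x)) • M (n + 1) x)
    (Qseq : ℕ → ℕ → X → Measure X)
    (hQseq0 : ∀ p x, Qseq p p x = Measure.dirac x)
    (hQseqS : ∀ p n x, p ≤ n → Qseq p (n + 1) x = (Qseq p n x).bind (Q (n + 1)))
    -- prediction filters for initial conditions μ and μ'
    (η η' : ℕ → Measure X)
    (hη : ∀ n, η n = ((μ.bind (Qseq 0 n)) Set.univ)⁻¹ • μ.bind (Qseq 0 n))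
    (hη' : ∀ n, η' n = ((μ'.bind (Qseq 0 n)) Set.univ)⁻¹ • μ'.bind (Qseq 0 n))
    (hZ : ∀ n, 0 < (μ.bind (Qseq 0 n)) Set.univ ∧ (μ.bind (Qseq 0 n)) Set.univ < ⊤)
    (hZ' : ∀ n, 0 < (μ'.bind (Qseq 0 n)) Set.univ ∧ (μ'.bind (Qseq 0 n)) Set.univ < ⊤)
    -- λ-values and h-functions, defined with respect to μ
    (lam : ℕ → ℝ) (hlam : ∀ q, lam q = ∫ x, G q x ∂ η q) (hlampos : ∀ q, 0 < lam q)
    (h0 : ℕ → X → ℝ)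
    (hh0 : ∀ n x, h0 n x =
      ((Qseq 0 n x Set.univ).toReal) / ∏ q ∈ Finset.range n, lam q)
    -- weighting function v = e^V
    (v : X → ℝ) (hv1 : ∀ x, 1 ≤ v x) (hvmeas : Measurable v)
    (hμv : Integrable v μ) (hμ'v : Integrable v μ')
    -- multiplicative stability hypothesis (Theorem MET)
    (ρ c : ℝ) (hρ0 : 0 ≤ ρ) (hρ1 : ρ < 1) (hc : 0 ≤ c)
    (hstab : ∀ (φ : X → ℝ) (K : ℝ), Measurable φ → (∀ x, |φ x| ≤ K * v x) →
      ∀ n, 1 ≤ n → ∀ x,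
        |(∫ y, φ y ∂ (Qseq 0 n x)) / ∏ q ∈ Finset.range n, lam q -
            h0 n x * ∫ y, φ y ∂ η n| ≤
          ρ ^ n * K * c * v x * ∫ y, v y ∂ μ)
    -- μ' charges a set on which the h-functions are uniformly bounded below
    (Cd : Set X) (hμ'Cd : 0 < μ' Cd)
    (h0lb : ℝ) (hh0lb : 0 < h0lb)
    (hinf : ∀ n, 1 ≤ n → ∀ x ∈ Cd, h0lb ≤ h0 n x) :
    ∃ c' : ℝ, ∀ n, 1 ≤ n → ∀ φ : X → ℝ, Measurable φ → (∀ x, |φ x| ≤ v x) →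
      |(∫ x, φ x ∂ η n) - ∫ x, φ x ∂ η' n| ≤
        ρ ^ n * c' * (∫ x, v x ∂ μ) * ∫ x, v x ∂ μ' := by
  classical
  have hμv0 : (0:ℝ) ≤ ∫ x, v x ∂ μ := integral_nonneg fun x => le_trans zero_le_one (hv1 x)
  have hμ'v0 : (0:ℝ) ≤ ∫ x, v x ∂ μ' := integral_nonneg fun x => le_trans zero_le_one (hv1 x)
  have hδ : 0 < h0lb * (μ' Cd).toReal :=
    mul_pos hh0lb (ENNReal.toReal_pos hμ'Cd.ne' (measure_ne_top μ' Cd))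
  set δ : ℝ := h0lb * (μ' Cd).toReal with hδdef
  -- each Qseq 0 n x is a finite measure
  have hfin : ∀ n x, Qseq 0 n x Set.univ < ⊤ := by
    intro n
    induction n with
    | zero => intro x; rw [hQseq0]; simp
    | succ n ih =>
      intro x
      rw [hQseqS 0 n x (Nat.zero_le n)]
      by_cases hme : AEMeasurable (Q (n+1)) (Qseq 0 n x)
      · rw [fk_bind_eq_mk hme, Measure.bind_apply MeasurableSet.univ hme.measurable_mk.aemeasurable]
        obtain ⟨C, hC⟩ := hGbdd n
        have hpt : ∀ᵐ y ∂(Qseq 0 n x), hme.mk (Q (n+1)) y Set.univ ≤ ENNReal.ofReal C := by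
          filter_upwards [hme.ae_eq_mk] with y hy
          rw [← hy, hQ n y]
          haveI := hM (n+1) y
          simp only [Measure.smul_apply, smul_eq_mul, measure_univ, mul_one]
          exact ENNReal.ofReal_le_ofReal (hC y)
        calc ∫⁻ y, hme.mk (Q (n+1)) y Set.univ ∂(Qseq 0 n x)
            ≤ ∫⁻ _, ENNReal.ofReal C ∂(Qseq 0 n x) := lintegral_mono_ae hpt
          _ = ENNReal.ofReal C * Qseq 0 n x Set.univ := by rw [lintegral_const]
          _ < ⊤ := ENNReal.mul_lt_top ENNReal.ofReal_lt_top (ih x)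
      · rw [Measure.bind, Measure.map_of_not_aemeasurable hme, Measure.join_zero]
        simp
  refine ⟨c / δ, ?_⟩
  intro n hn φ hφm hφv
  set Λ : ℝ := ∏ q ∈ Finset.range n, lam q with hΛdef
  have hΛ : 0 < Λ := Finset.prod_pos fun q _ => hlampos q
  have hZ'pos := (hZ' n).1
  have hZ'top := (hZ' n).2
  have hκ' : AEMeasurable (Qseq 0 n) μ' := fk_aemeasurable_of_bind hZ'pos.ne'
  set g' := hκ'.mk (Qseq 0 n) with hg'def
  have hg'meas : Measurable g' := hκ'.measurable_mk
  have hg'ae : Qseq 0 n =ᵐ[μ'] g' := hκ'.ae_eq_mk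
  have hbind' : μ'.bind (Qseq 0 n) = μ'.bind g' := fk_bind_eq_mk hκ'
  have hZ'eq : μ'.bind (Qseq 0 n) Set.univ = ∫⁻ x, g' x Set.univ ∂μ' := by
    rw [hbind', Measure.bind_apply MeasurableSet.univ hg'meas.aemeasurable]
  set r : ℝ := ρ ^ n * c * ∫ y, v y ∂ μ with hrdef
  have hr0 : 0 ≤ r := mul_nonneg (mul_nonneg (pow_nonneg hρ0 n) hc) hμv0
  have hstab' : ∀ ψ : X → ℝ, Measurable ψ → (∀ x, |ψ x| ≤ v x) → ∀ x,
      |(∫ y, ψ y ∂ Qseq 0 n x) / Λ - h0 n x * ∫ y, ψ y ∂ η n| ≤ r * v x := by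
    intro ψ hm hb x
    have h1 := hstab ψ 1 hm (fun x => by simpa using hb x) n hn x
    rw [← hΛdef] at h1
    calc |(∫ y, ψ y ∂ Qseq 0 n x) / Λ - h0 n x * ∫ y, ψ y ∂ η n|
        ≤ ρ ^ n * 1 * c * v x * ∫ y, v y ∂ μ := h1
      _ = r * v x := by rw [hrdef]; ring
  have hh0nn : ∀ x, 0 ≤ h0 n x := by
    intro x
    rw [hh0 n x, ← hΛdef]
    exact div_nonneg ENNReal.toReal_nonneg hΛ.le
  have hh0meas : AEMeasurable (h0 n) μ' := by
    have h1 : AEMeasurable (fun x => Qseq 0 n x Set.univ) μ' :=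
      (Measure.measurable_coe MeasurableSet.univ).comp_aemeasurable hκ'
    exact (h1.ennreal_toReal.div_const Λ).congr
      (Filter.Eventually.of_forall fun x => by rw [hh0 n x, ← hΛdef])
  haveI hηn : IsProbabilityMeasure (η n) := by
    constructor
    rw [hη n, Measure.smul_apply, smul_eq_mul]
    exact ENNReal.inv_mul_cancel (hZ n).1.ne' (hZ n).2.ne
  have hg'lt : ∫⁻ x, g' x Set.univ ∂μ' ≠ ⊤ := by rw [← hZ'eq]; exact hZ'top.ne
  have hg'coe : Measurable fun x => g' x Set.univ :=
    (Measure.measurable_coe MeasurableSet.univ).comp hg'meas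
  have hg'aefin : ∀ᵐ x ∂μ', g' x Set.univ < ⊤ := ae_lt_top hg'coe hg'lt
  have hh0int : Integrable (h0 n) μ' := by
    have h1 : Integrable (fun x => (g' x Set.univ).toReal / Λ) μ' :=
      (integrable_toReal_of_lintegral_ne_top hg'coe.aemeasurable hg'lt).div_const Λ
    apply h1.congr
    filter_upwards [hg'ae] with x hx
    rw [hh0 n x, ← hΛdef, hx]
  have hh0val : ∫ x, h0 n x ∂μ' = (μ'.bind (Qseq 0 n) Set.univ).toReal / Λ := by
    have h2 : ∫ x, h0 n x ∂μ' = ∫ x, (g' x Set.univ).toReal / Λ ∂μ' := by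
      apply integral_congr_ae
      filter_upwards [hg'ae] with x hx
      rw [hh0 n x, ← hΛdef, hx]
    rw [h2, integral_div]
    congr 1
    rw [integral_toReal hg'coe.aemeasurable hg'aefin, hZ'eq]
  have hδle : δ ≤ ∫ x, h0 n x ∂μ' := by
    have hsub : Cd ⊆ {x | ENNReal.ofReal h0lb ≤ ENNReal.ofReal (h0 n x)} := fun x hx =>
      ENNReal.ofReal_le_ofReal (hinf n hn x hx)
    have h1 : ENNReal.ofReal h0lb * μ' Cd ≤ ∫⁻ x, ENNReal.ofReal (h0 n x) ∂μ' :=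
      le_trans (mul_le_mul_right (measure_mono hsub) _)
        (mul_meas_ge_le_lintegral₀ (hh0meas.ennreal_ofReal) _)
    rw [← ofReal_integral_eq_lintegral_ofReal hh0int
      (Filter.Eventually.of_forall hh0nn)] at h1
    have h2 := ENNReal.toReal_mono ENNReal.ofReal_ne_top h1
    rw [ENNReal.toReal_mul, ENNReal.toReal_ofReal hh0lb.le,
      ENNReal.toReal_ofReal (integral_nonneg hh0nn)] at h2
    rw [hδdef]
    exact h2
  -- Claim 1: integrability transfers from μ-side to μ'-side
  have claim1 : Integrable φ (μ.bind (Qseq 0 n)) → Integrable φ (μ'.bind (Qseq 0 n)) := by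
    intro hint
    have hψη : Integrable (fun y => |φ y|) (η n) := by
      have h1 : Integrable φ (η n) := by
        rw [hη n]
        exact hint.smul_measure (ENNReal.inv_ne_top.mpr (hZ n).1.ne')
      exact h1.abs
    set A := ∫ y, |φ y| ∂ η n with hAdef
    have hA0 : 0 ≤ A := integral_nonneg fun y => abs_nonneg _
    have key : ∀ x, ∫⁻ y, ENNReal.ofReal |φ y| ∂ Qseq 0 n x ≤
        ENNReal.ofReal (Λ * (h0 n x * A + r * v x)) := by
      intro x
      haveI : IsFiniteMeasure (Qseq 0 n x) := ⟨hfin n x⟩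
      have hrepr : ∀ y, ENNReal.ofReal |φ y| = ⨆ k : ℕ, ENNReal.ofReal (min |φ y| (k:ℝ)) := by
        intro y
        apply le_antisymm
        · obtain ⟨k, hk⟩ := exists_nat_ge |φ y|
          exact le_trans (le_of_eq (by rw [min_eq_left hk]))
            (le_iSup (fun k : ℕ => ENNReal.ofReal (min |φ y| (k:ℝ))) k)
        · exact iSup_le fun k => ENNReal.ofReal_le_ofReal (min_le_left _ _)
      calc ∫⁻ y, ENNReal.ofReal |φ y| ∂ Qseq 0 n x
          = ∫⁻ y, ⨆ k : ℕ, ENNReal.ofReal (min |φ y| (k:ℝ)) ∂ Qseq 0 n x :=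
            lintegral_congr hrepr
        _ = ⨆ k : ℕ, ∫⁻ y, ENNReal.ofReal (min |φ y| (k:ℝ)) ∂ Qseq 0 n x := by
            apply lintegral_iSup
            · intro k
              exact ((hφm.abs).min measurable_const).ennreal_ofReal
            · intro k l hkl y
              exact ENNReal.ofReal_le_ofReal (min_le_min le_rfl (Nat.cast_le.mpr hkl))
        _ ≤ ENNReal.ofReal (Λ * (h0 n x * A + r * v x)) := by
            apply iSup_le
            intro k
            have hψk_meas : Measurable (fun y => min |φ y| (k:ℝ)) :=
              (hφm.abs).min measurable_const
            have hψk_nn : ∀ y, 0 ≤ min |φ y| (k:ℝ) := fun y =>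
              le_min (abs_nonneg _) (Nat.cast_nonneg k)
            have hψk_bd : ∀ y, |min |φ y| (k:ℝ)| ≤ v y := by
              intro y
              rw [abs_of_nonneg (hψk_nn y)]
              exact le_trans (min_le_left _ _) (hφv y)
            have hψk_int : Integrable (fun y => min |φ y| (k:ℝ)) (Qseq 0 n x) := by
              apply Integrable.mono' (integrable_const (k:ℝ)) hψk_meas.aestronglyMeasurable
              apply Filter.Eventually.of_forall
              intro y
              rw [Real.norm_eq_abs, abs_of_nonneg (hψk_nn y)]
              exact min_le_right _ _
            rw [← ofReal_integral_eq_lintegral_ofReal hψk_int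
              (Filter.Eventually.of_forall hψk_nn)]
            apply ENNReal.ofReal_le_ofReal
            have hb := hstab' _ hψk_meas hψk_bd x
            have hb2 := (abs_le.1 hb).2
            have hψk_intη : Integrable (fun y => min |φ y| (k:ℝ)) (η n) := by
              apply Integrable.mono' (integrable_const (k:ℝ)) hψk_meas.aestronglyMeasurable
              apply Filter.Eventually.of_forall
              intro y
              rw [Real.norm_eq_abs, abs_of_nonneg (hψk_nn y)]
              exact min_le_right _ _
            have hηk : ∫ y, min |φ y| (k:ℝ) ∂ η n ≤ A :=
              integral_mono hψk_intη hψη fun y => min_le_left _ _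
            have h3 : (∫ y, min |φ y| (k:ℝ) ∂ Qseq 0 n x) ≤
                (h0 n x * (∫ y, min |φ y| (k:ℝ) ∂ η n) + r * v x) * Λ := by
              rw [← div_le_iff₀ hΛ]
              linarith
            have h4 := mul_le_mul_of_nonneg_left hηk (hh0nn x)
            nlinarith
    have hlhs : ∫⁻ y, ENNReal.ofReal |φ y| ∂ (μ'.bind (Qseq 0 n)) ≤
        ∫⁻ x, ENNReal.ofReal (Λ * (h0 n x * A + r * v x)) ∂μ' := by
      rw [hbind', Measure.lintegral_bind hg'meas.aemeasurable (hφm.abs.ennreal_ofReal.aemeasurable)]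
      apply lintegral_mono_ae
      filter_upwards [hg'ae] with x hx
      rw [← hx]
      exact key x
    have hrhs : ∫⁻ x, ENNReal.ofReal (Λ * (h0 n x * A + r * v x)) ∂μ' < ⊤ := by
      have hpt : ∀ x, ENNReal.ofReal (Λ * (h0 n x * A + r * v x)) ≤
          ENNReal.ofReal (Λ * A) * ENNReal.ofReal (h0 n x) +
            ENNReal.ofReal (Λ * r) * ENNReal.ofReal (v x) := by
        intro x
        have hv0 : (0:ℝ) ≤ v x := le_trans zero_le_one (hv1 x)
        apply le_of_eq
        rw [show Λ * (h0 n x * A + r * v x) = (Λ * A) * h0 n x + (Λ * r) * (v x) by ring,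
          ENNReal.ofReal_add (mul_nonneg (mul_nonneg hΛ.le hA0) (hh0nn x))
            (mul_nonneg (mul_nonneg hΛ.le hr0) hv0),
          ENNReal.ofReal_mul (mul_nonneg hΛ.le hA0),
          ENNReal.ofReal_mul (mul_nonneg hΛ.le hr0)]
      have hfin1 : ∫⁻ x, ENNReal.ofReal (h0 n x) ∂μ' < ⊤ := by
        rw [← ofReal_integral_eq_lintegral_ofReal hh0int (Filter.Eventually.of_forall hh0nn)]
        exact ENNReal.ofReal_lt_top
      have hfin2 : ∫⁻ x, ENNReal.ofReal (v x) ∂μ' < ⊤ := by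
        rw [← ofReal_integral_eq_lintegral_ofReal hμ'v
          (Filter.Eventually.of_forall fun x => le_trans zero_le_one (hv1 x))]
        exact ENNReal.ofReal_lt_top
      calc ∫⁻ x, ENNReal.ofReal (Λ * (h0 n x * A + r * v x)) ∂μ'
          ≤ ∫⁻ x, (ENNReal.ofReal (Λ * A) * ENNReal.ofReal (h0 n x) +
              ENNReal.ofReal (Λ * r) * ENNReal.ofReal (v x)) ∂μ' := lintegral_mono hpt
        _ = ENNReal.ofReal (Λ * A) * ∫⁻ x, ENNReal.ofReal (h0 n x) ∂μ' +
            ENNReal.ofReal (Λ * r) * ∫⁻ x, ENNReal.ofReal (v x) ∂μ' := by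
            rw [lintegral_add_left'
              (hh0meas.ennreal_ofReal.const_mul _),
              lintegral_const_mul' _ _ ENNReal.ofReal_ne_top,
              lintegral_const_mul' _ _ ENNReal.ofReal_ne_top]
        _ < ⊤ := by
            apply ENNReal.add_lt_top.2
            exact ⟨ENNReal.mul_lt_top ENNReal.ofReal_lt_top hfin1,
              ENNReal.mul_lt_top ENNReal.ofReal_lt_top hfin2⟩
    refine ⟨hφm.aestronglyMeasurable, ?_⟩
    have heq : ∫⁻ y, (‖φ y‖₊ : ℝ≥0∞) ∂ (μ'.bind (Qseq 0 n)) =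
        ∫⁻ y, ENNReal.ofReal |φ y| ∂ (μ'.bind (Qseq 0 n)) :=
      lintegral_congr fun y => (fk_ofReal_abs _).symm
    have hfi : ∫⁻ y, (‖φ y‖₊ : ℝ≥0∞) ∂ (μ'.bind (Qseq 0 n)) < ⊤ := by
      rw [heq]; exact lt_of_le_of_lt hlhs hrhs
    exact hfi
  -- main case distinction
  by_cases hint' : Integrable φ (μ'.bind (Qseq 0 n))
  · -- main estimate
    set a := ∫ x, φ x ∂ η n with hadef
    set I' := ∫ y, φ y ∂ (μ'.bind (Qseq 0 n)) with hI'def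
    set W := (μ'.bind (Qseq 0 n) Set.univ).toReal with hWdef
    have hWpos : 0 < W := ENNReal.toReal_pos hZ'pos.ne' hZ'top.ne
    have hFmeasP : Measurable (fun x => ∫⁻ y, ENNReal.ofReal (φ y) ∂ g' x) :=
      (Measure.measurable_lintegral (hφm.ennreal_ofReal)).comp hg'meas
    have hFmeasN : Measurable (fun x => ∫⁻ y, ENNReal.ofReal (-φ y) ∂ g' x) :=
      (Measure.measurable_lintegral (hφm.neg.ennreal_ofReal)).comp hg'meas
    have hP : ∫⁻ y, ENNReal.ofReal (φ y) ∂ (μ'.bind (Qseq 0 n)) =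
        ∫⁻ x, ∫⁻ y, ENNReal.ofReal (φ y) ∂ g' x ∂μ' := by
      rw [hbind', Measure.lintegral_bind hg'meas.aemeasurable (hφm.ennreal_ofReal.aemeasurable)]
    have hN : ∫⁻ y, ENNReal.ofReal (-φ y) ∂ (μ'.bind (Qseq 0 n)) =
        ∫⁻ x, ∫⁻ y, ENNReal.ofReal (-φ y) ∂ g' x ∂μ' := by
      rw [hbind', Measure.lintegral_bind (f := fun y => ENNReal.ofReal (-φ y)) hg'meas.aemeasurable (hφm.neg.ennreal_ofReal.aemeasurable)]
    have hnormfin : ∫⁻ y, (‖φ y‖₊ : ℝ≥0∞) ∂ (μ'.bind (Qseq 0 n)) < ⊤ := hint'.2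
    have hPfin : ∫⁻ x, ∫⁻ y, ENNReal.ofReal (φ y) ∂ g' x ∂μ' ≠ ⊤ := by
      rw [← hP]
      refine (lt_of_le_of_lt (lintegral_mono fun y => ?_) hnormfin).ne
      rw [fk_enorm_eq]
      exact le_self_add
    have hNfin : ∫⁻ x, ∫⁻ y, ENNReal.ofReal (-φ y) ∂ g' x ∂μ' ≠ ⊤ := by
      rw [← hN]
      refine (lt_of_le_of_lt (lintegral_mono fun y => ?_) hnormfin).ne
      rw [fk_enorm_eq]
      exact le_add_self
    have haefin : ∀ᵐ x ∂μ', (∫⁻ y, ENNReal.ofReal (φ y) ∂ g' x < ⊤) ∧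
        (∫⁻ y, ENNReal.ofReal (-φ y) ∂ g' x < ⊤) :=
      (ae_lt_top hFmeasP hPfin).and (ae_lt_top hFmeasN hNfin)
    have hgmk : ∀ᵐ x ∂μ', ∫ y, φ y ∂ Qseq 0 n x =
        (∫⁻ y, ENNReal.ofReal (φ y) ∂ g' x).toReal -
          (∫⁻ y, ENNReal.ofReal (-φ y) ∂ g' x).toReal := by
      filter_upwards [hg'ae, haefin] with x hx hfin2
      rw [hx]
      have hintx : Integrable φ (g' x) := by
        refine ⟨hφm.aestronglyMeasurable, ?_⟩
        have heq2 : ∫⁻ y, (‖φ y‖₊ : ℝ≥0∞) ∂ g' x =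
            ∫⁻ y, (ENNReal.ofReal (φ y) + ENNReal.ofReal (-φ y)) ∂ g' x :=
          lintegral_congr fun y => fk_enorm_eq _
        have : ∫⁻ y, (‖φ y‖₊ : ℝ≥0∞) ∂ g' x < ⊤ := by
          rw [heq2, lintegral_add_left (hφm.ennreal_ofReal)]
          exact ENNReal.add_lt_top.2 ⟨hfin2.1, hfin2.2⟩
        exact this
      exact integral_eq_lintegral_pos_part_sub_lintegral_neg_part hintx
    have htintP : Integrable (fun x => (∫⁻ y, ENNReal.ofReal (φ y) ∂ g' x).toReal) μ' :=
      integrable_toReal_of_lintegral_ne_top hFmeasP.aemeasurable hPfin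
    have htintN : Integrable (fun x => (∫⁻ y, ENNReal.ofReal (-φ y) ∂ g' x).toReal) μ' :=
      integrable_toReal_of_lintegral_ne_top hFmeasN.aemeasurable hNfin
    have hgint : Integrable (fun x => ∫ y, φ y ∂ Qseq 0 n x) μ' := by
      apply Integrable.congr (htintP.sub htintN)
      filter_upwards [hgmk] with x hx
      rw [Pi.sub_apply, hx]
    have hgval : ∫ x, (∫ y, φ y ∂ Qseq 0 n x) ∂μ' = I' := by
      rw [integral_congr_ae hgmk, integral_sub htintP htintN,
        integral_toReal hFmeasP.aemeasurable (haefin.mono fun x h => h.1),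
        integral_toReal hFmeasN.aemeasurable (haefin.mono fun x h => h.2),
        ← hP, ← hN, hI'def,
        ← integral_eq_lintegral_pos_part_sub_lintegral_neg_part hint']
    have hDint : Integrable (fun x => (∫ y, φ y ∂ Qseq 0 n x) / Λ - h0 n x * a) μ' :=
      (hgint.div_const Λ).sub (hh0int.mul_const a)
    have hDval : ∫ x, ((∫ y, φ y ∂ Qseq 0 n x) / Λ - h0 n x * a) ∂μ' =
        I' / Λ - (W / Λ) * a := by
      rw [integral_sub (hgint.div_const Λ) (hh0int.mul_const a), integral_div, hgval,
        integral_mul_const, hh0val]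
    have hDle : |∫ x, ((∫ y, φ y ∂ Qseq 0 n x) / Λ - h0 n x * a) ∂μ'| ≤
        r * ∫ x, v x ∂μ' := by
      calc |∫ x, ((∫ y, φ y ∂ Qseq 0 n x) / Λ - h0 n x * a) ∂μ'|
          ≤ ∫ x, |(∫ y, φ y ∂ Qseq 0 n x) / Λ - h0 n x * a| ∂μ' := by
            simpa [Real.norm_eq_abs] using
              norm_integral_le_integral_norm (fun x => (∫ y, φ y ∂ Qseq 0 n x) / Λ - h0 n x * a)
                (μ := μ')
        _ ≤ ∫ x, r * v x ∂μ' :=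
            integral_mono hDint.abs (hμ'v.const_mul r) fun x => hstab' φ hφm hφv x
        _ = r * ∫ x, v x ∂μ' := integral_const_mul r v
    have hη'val : ∫ x, φ x ∂ η' n = I' / W := by
      rw [hη' n, integral_smul_measure, ENNReal.toReal_inv, smul_eq_mul]
      rw [← hI'def, ← hWdef]
      ring
    have hWδΛ : δ * Λ ≤ W := by
      have h1 : δ ≤ W / Λ := by rw [← hh0val]; exact hδle
      exact (le_div_iff₀ hΛ).1 h1
    have hIWa : |I' - W * a| ≤ Λ * (r * ∫ x, v x ∂μ') := by
      have heq3 : I' - W * a = (∫ x, ((∫ y, φ y ∂ Qseq 0 n x) / Λ - h0 n x * a) ∂μ') * Λ := by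
        rw [hDval]
        field_simp
        try ring
      rw [heq3, abs_mul, abs_of_pos hΛ, mul_comm]
      exact mul_le_mul_of_nonneg_left hDle hΛ.le
    rw [hη'val]
    have habs : |a - I' / W| = |I' - W * a| / W := by
      have h5 : a - I' / W = (W * a - I') / W := by field_simp; try ring
      rw [h5, abs_div, abs_of_pos hWpos, abs_sub_comm]
    rw [habs]
    have hX0 : 0 ≤ r * ∫ x, v x ∂μ' := mul_nonneg hr0 hμ'v0
    calc |I' - W * a| / W ≤ (Λ * (r * ∫ x, v x ∂μ')) / W := by
          apply div_le_div_of_nonneg_right hIWa hWpos.le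
      _ ≤ (r * ∫ x, v x ∂μ') / δ := by
          rw [div_le_div_iff₀ hWpos hδ]
          calc Λ * (r * ∫ x, v x ∂μ') * δ = (r * ∫ x, v x ∂μ') * (δ * Λ) := by ring
            _ ≤ (r * ∫ x, v x ∂μ') * W := mul_le_mul_of_nonneg_left hWδΛ hX0
      _ = ρ ^ n * (c / δ) * (∫ x, v x ∂ μ) * ∫ x, v x ∂ μ' := by
          rw [hrdef, div_eq_mul_inv, div_eq_mul_inv]
          ring
  · -- degenerate case: both integrals vanish
    have h1 : ∫ x, φ x ∂ η' n = 0 := by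
      rw [hη' n, integral_smul_measure, integral_undef hint', smul_zero]
    have h2 : ∫ x, φ x ∂ η n = 0 := by
      have hni : ¬ Integrable φ (μ.bind (Qseq 0 n)) := fun h => hint' (claim1 h)
      rw [hη n, integral_smul_measure, integral_undef hni, smul_zero]
    rw [h1, h2, sub_zero, abs_zero]
    exact mul_nonneg (mul_nonneg (mul_nonneg (pow_nonneg hρ0 n) (div_nonneg hc hδ.le)) hμv0)
      hμ'v0
end

section
/- Supermartingale norm bound: let A_p := |||Q_p 1_{C_d^c}|||_v and B_p := |||Q_p 1_{C_d}|||_v, and define Ξ_0 := v(X_p), Ξ_j := [∏_{q=p}^{p+j-1} G_q(X_q)/(A_{q+1}^{1_{C_d^c}(X_q)} B_{q+1}^{1_{C_d}(X_q)})]·v(X_{p+j}). Then E_{p+j-1,X_{p+j-1}}[Ξ_j] ≤ Ξ_{j-1} for 1 ≤ j ≤ n−p, and hence E_{p,x}[Ξ_{n-p}] ≤ v(x). -/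
open MeasureTheory ENNReal

/-- Expectation of a path functional for the non-homogeneous Markov chain with
kernels `M`, started at time `p` with remaining horizon `k`. -/
noncomputable def EE {X : Type*} [MeasurableSpace X]
    (M : ℕ → X → MeasureTheory.Measure X) (φ : (ℕ → X) → ℝ≥0∞) :
    ℕ → ℕ → (ℕ → X) → ℝ≥0∞
  | _, 0, path => φ path
  | p, k + 1, path =>
      ∫⁻ y, EE M φ (p + 1) k (Function.update path (p + 1) y) ∂ (M (p + 1) (path p))

/-- supermartingale norm bound.  With
`Ξ_0 = v(X_p)` and
`Ξ_j = [∏_{q=p}^{p+j-1} G_q(X_q)/(A_{q+1}^{1_{C^c}(X_q)} B_{q+1}^{1_C(X_q)})]·v(X_{p+j})`,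
where the weighted bound `Q_{q+1}(v)(x) ≤ A_{q+1}^{1_{C^c}(x)} B_{q+1}^{1_C(x)} v(x)`
holds, one has `E_{p+j-1,X_{p+j-1}}[Ξ_j] ≤ Ξ_{j-1}` for `1 ≤ j ≤ n−p`, and hence
`E_{p,x}[Ξ_{n-p}] ≤ v(x)`. -/
theorem fk_supermartingale_norm_bound
    {X : Type*} [MeasurableSpace X]
    (M : ℕ → X → Measure X) (hM : ∀ q x, IsProbabilityMeasure (M q x))
    (G : ℕ → X → ℝ≥0∞) (hGmeas : ∀ q, Measurable (G q)) (hGpos : ∀ q x, 0 < G q x)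
    (Q : ℕ → X → Measure X) (hQ : ∀ q x, Q (q + 1) x = (G q x) • M (q + 1) x)
    (v : X → ℝ≥0∞) (hv1 : ∀ x, 1 ≤ v x) (hvmeas : Measurable v)
    (Cd : Set X) (hCd : MeasurableSet Cd)
    (A B : ℕ → ℝ≥0∞)
    (hApos : ∀ q, 0 < A q) (hAfin : ∀ q, A q < ⊤)
    (hBpos : ∀ q, 0 < B q) (hBfin : ∀ q, B q < ⊤)
    -- the weighted one-step bound Q_{q+1}(v)(x) ≤ A_{q+1}^{1_{C^c}(x)} B_{q+1}^{1_C(x)} v(x)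
    (hkey : ∀ q x, ∫⁻ y, v y ∂ (Q (q + 1) x) ≤
      (Set.indicator Cd (fun _ => B (q + 1)) x +
        Set.indicator Cdᶜ (fun _ => A (q + 1)) x) * v x)
    (p n : ℕ) (hpn : p ≤ n)
    -- the supermartingale sequence Ξ
    (Xi : ℕ → (ℕ → X) → ℝ≥0∞)
    (hXi : ∀ j path, Xi j path =
      (∏ q ∈ Finset.Ico p (p + j),
        G q (path q) /
          (Set.indicator Cd (fun _ => B (q + 1)) (path q) +
            Set.indicator Cdᶜ (fun _ => A (q + 1)) (path q))) * v (path (p + j))) :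
    (∀ j, 1 ≤ j → j ≤ n - p → ∀ path : ℕ → X,
      ∫⁻ y, Xi j (Function.update path (p + j) y)
          ∂ (M (p + j) (path (p + j - 1))) ≤ Xi (j - 1) path) ∧
    (∀ x, EE M (Xi (n - p)) p (n - p) (fun _ => x) ≤ v x) := by
  set D : ℕ → X → ℝ≥0∞ := fun q x =>
    Set.indicator Cd (fun _ => B (q + 1)) x + Set.indicator Cdᶜ (fun _ => A (q + 1)) x with hD
  have hDne0 : ∀ q x, D q x ≠ 0 := by
    intro q x
    by_cases hx : x ∈ Cd
    · simp [hD, Set.indicator_of_mem hx, (hBpos (q + 1)).ne']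
    · simp [hD, Set.indicator_of_notMem hx,
        Set.indicator_of_mem (Set.mem_compl hx), (hApos (q + 1)).ne']
  have hDnetop : ∀ q x, D q x ≠ ⊤ := by
    intro q x
    by_cases hx : x ∈ Cd
    · simp [hD, Set.indicator_of_mem hx, Set.indicator_of_notMem (Set.notMem_compl_iff.mpr hx),
        (hBfin (q + 1)).ne]
    · simp [hD, Set.indicator_of_notMem hx,
        Set.indicator_of_mem (Set.mem_compl hx), (hAfin (q + 1)).ne]
  -- the one-step supermartingale inequality
  have step : ∀ j, 1 ≤ j → ∀ path : ℕ → X,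
      ∫⁻ y, Xi j (Function.update path (p + j) y)
          ∂ (M (p + j) (path (p + j - 1))) ≤ Xi (j - 1) path := by
    intro j hj path
    obtain ⟨i, rfl⟩ : ∃ i, j = i + 1 := ⟨j - 1, (Nat.succ_pred_eq_of_pos hj).symm⟩
    have hpj : p + (i + 1) = p + i + 1 := rfl
    have hpj1 : p + (i + 1) - 1 = p + i := rfl
    set x := path (p + i) with hx
    set C' : ℝ≥0∞ := ∏ q ∈ Finset.Ico p (p + i), G q (path q) / D q (path q) with hC'
    have hupd : ∀ y, Xi (i + 1) (Function.update path (p + (i + 1)) y)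
        = (C' * (G (p + i) x / D (p + i) x)) * v y := by
      intro y
      rw [hXi]
      have hprod : (∏ q ∈ Finset.Ico p (p + (i + 1)),
          G q ((Function.update path (p + (i + 1)) y) q) /
            D q ((Function.update path (p + (i + 1)) y) q))
          = C' * (G (p + i) x / D (p + i) x) := by
        rw [hpj, Finset.prod_Ico_succ_top (Nat.le_add_right p i)]
        congr 1
        · apply Finset.prod_congr rfl
          intro q hq
          have hqlt : q < p + i + 1 := by
            have := (Finset.mem_Ico.mp hq).2; omega
          rw [Function.update_of_ne (Nat.ne_of_lt hqlt)]
        · rw [Function.update_of_ne (by omega : p + i ≠ p + i + 1)]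
      rw [hprod, Function.update_self]
    simp only [hpj1]
    calc ∫⁻ y, Xi (i + 1) (Function.update path (p + (i + 1)) y)
            ∂ (M (p + (i + 1)) x)
        = ∫⁻ y, (C' * (G (p + i) x / D (p + i) x)) * v y ∂ (M (p + (i + 1)) x) := by
          exact lintegral_congr fun y => hupd y
      _ = (C' * (G (p + i) x / D (p + i) x)) * ∫⁻ y, v y ∂ (M (p + (i + 1)) x) :=
          lintegral_const_mul _ hvmeas
      _ = C' * ((G (p + i) x / D (p + i) x) * ∫⁻ y, v y ∂ (M (p + (i + 1)) x)) := by
          ring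
      _ ≤ C' * v x := by
          apply mul_le_mul_right
          have hQv : (G (p + i) x) * ∫⁻ y, v y ∂ (M (p + (i + 1)) x)
              ≤ D (p + i) x * v x := by
            have := hkey (p + i) x
            rwa [hQ (p + i) x, lintegral_smul_measure] at this
          have e1 : G (p + i) x / D (p + i) x * ∫⁻ y, v y ∂ (M (p + (i + 1)) x)
              = (G (p + i) x * ∫⁻ y, v y ∂ (M (p + (i + 1)) x)) * (D (p + i) x)⁻¹ := by
            rw [div_eq_mul_inv]; ring
          rw [e1]
          calc (G (p + i) x * ∫⁻ y, v y ∂ (M (p + (i + 1)) x)) * (D (p + i) x)⁻¹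
              ≤ (D (p + i) x * v x) * (D (p + i) x)⁻¹ := mul_le_mul_left hQv _
            _ = v x := by
                rw [mul_comm (D (p + i) x) (v x), mul_assoc,
                  ENNReal.mul_inv_cancel (hDne0 _ _) (hDnetop _ _), mul_one]
      _ = Xi i path := by rw [hXi i path]
  -- the iterated bound
  have main : ∀ k, k ≤ n - p → ∀ path : ℕ → X,
      EE M (Xi (n - p)) (p + (n - p - k)) k path ≤ Xi (n - p - k) path := by
    intro k
    induction k with
    | zero =>
        intro _ path
        simp [EE]
    | succ k ih =>
        intro hk path
        have hk' : k ≤ n - p := Nat.le_of_succ_le hk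
        have ht : p + (n - p - (k + 1)) + 1 = p + (n - p - k) := by omega
        rw [EE, ht]
        calc ∫⁻ y, EE M (Xi (n - p)) (p + (n - p - k)) k
                (Function.update path (p + (n - p - k)) y)
                ∂ (M (p + (n - p - k)) (path (p + (n - p - (k + 1)))))
            ≤ ∫⁻ y, Xi (n - p - k) (Function.update path (p + (n - p - k)) y)
                ∂ (M (p + (n - p - k)) (path (p + (n - p - (k + 1))))) :=
              lintegral_mono fun y => ih hk' _
          _ ≤ Xi (n - p - k - 1) path := by
              have h1 : 1 ≤ n - p - k := by omega
              have h2 : p + (n - p - k) - 1 = p + (n - p - (k + 1)) := by omega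
              have := step (n - p - k) h1 path
              rwa [h2] at this
          _ = Xi (n - p - (k + 1)) path := by rw [Nat.sub_sub]
  refine ⟨fun j hj _ path => step j hj path, fun x => ?_⟩
  have h := main (n - p) le_rfl (fun _ => x)
  simp only [Nat.sub_self, Nat.add_zero] at h
  calc EE M (Xi (n - p)) p (n - p) (fun _ => x) ≤ Xi 0 (fun _ => x) := h
    _ = v x := by
        rw [hXi]
        simp
end
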